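/- Riemann-sum approximation: let h > 0 and f(x) = e^{hx}/x. For fixed 0 < t₀ < t, the sums S(ε) := ∑_{i=⌊t₀/2ε⌋}^{⌊t/2ε⌋} 2ε·f((2i+1)ε) satisfy: there is K > 0 such that for all sufficiently small ε > 0 there exists T₀ such that for all t > T₀, |ln(S(ε)/∫_{t₀}^{t} f(x)dx)| < Kε. -/

import Mathlib

open Filter Real Set Finset intervalIntegral

private lemma fInt (h p q : ℝ) (hp : 0 < p) (hq : 0 < q) :
    IntervalIntegrable (fun x => Real.exp (h*x)/x) MeasureTheory.volume p q := by
  apply ContinuousOn.intervalIntegrable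
  apply ContinuousOn.div (by fun_prop) continuousOn_id
  intro x hx
  have h1 : min p q ≤ x := hx.1
  have : 0 < x := lt_of_lt_of_le (lt_min hp hq) h1
  exact ne_of_gt this

private lemma int_le_const {g : ℝ → ℝ} {p q M : ℝ} (hpq : p ≤ q)
    (hg : IntervalIntegrable g MeasureTheory.volume p q)
    (hb : ∀ x ∈ Set.Icc p q, g x ≤ M) :
    ∫ x in p..q, g x ≤ (q - p) * M := by
  have := intervalIntegral.integral_mono_on hpq hg intervalIntegrable_const hb
  simpa [smul_eq_mul] using this

private lemma const_le_int {g : ℝ → ℝ} {p q M : ℝ} (hpq : p ≤ q)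
    (hg : IntervalIntegrable g MeasureTheory.volume p q)
    (hb : ∀ x ∈ Set.Icc p q, M ≤ g x) :
    (q - p) * M ≤ ∫ x in p..q, g x := by
  have := intervalIntegral.integral_mono_on hpq intervalIntegrable_const hg hb
  simpa [smul_eq_mul] using this

private lemma cell (h t₀ ε c : ℝ) (hh : 0 < h) (ht₀ : 0 < t₀) (hε : 0 < ε)
    (hε8 : ε ≤ t₀/8) (hc : t₀ - ε ≤ c) :
    2*ε*(Real.exp (h*c)/c) ≤ Real.exp ((h+4/t₀)*ε) * ∫ x in (c-ε)..(c+ε), Real.exp (h*x)/x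
  ∧ Real.exp (-((h+4/t₀)*ε)) * (∫ x in (c-ε)..(c+ε), Real.exp (h*x)/x) ≤ 2*ε*(Real.exp (h*c)/c) := by
  have hc0 : 0 < c := by linarith
  have hcε : 0 < c - ε := by linarith
  have hint := fInt h (c-ε) (c+ε) hcε (by linarith)
  set u : ℝ := (h+4/t₀)*ε with hu
  have hu0 : 0 < u := by
    have : 0 < h + 4/t₀ := by positivity
    positivity
  have hEpos : 0 < Real.exp u := Real.exp_pos _
  have e3 : 1 + 4/t₀*ε ≤ Real.exp (4/t₀*ε) := by
    have := Real.add_one_le_exp (4/t₀*ε); linarith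
  -- pointwise upper bound
  have hub : ∀ x ∈ Set.Icc (c-ε) (c+ε),
      Real.exp (h*x)/x ≤ Real.exp (h*c)/c * Real.exp u := by
    intro x hx
    have hx1 := hx.1; have hx2 := hx.2
    have hx0 : 0 < x := lt_of_lt_of_le hcε hx1
    rw [div_mul_eq_mul_div, div_le_div_iff₀ hx0 hc0]
    have e1 : Real.exp (h*x) ≤ Real.exp (h*c) * Real.exp (h*ε) := by
      rw [← Real.exp_add]; apply Real.exp_le_exp.mpr; nlinarith
    have e2 : Real.exp u = Real.exp (h*ε) * Real.exp (4/t₀*ε) := by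
      rw [← Real.exp_add, hu]; ring_nf
    have key : c ≤ x * (1 + 4/t₀*ε) := by
      have hx34 : 3*t₀/4 ≤ x := by linarith
      have h1 : 3*ε ≤ x * (4/t₀*ε) := by
        rw [← sub_nonneg]
        have e : x * (4/t₀*ε) - 3*ε = (4*ε/t₀) * (x - 3*t₀/4) := by field_simp
        rw [e]; exact mul_nonneg (by positivity) (by linarith)
      nlinarith
    have hexc : 0 < Real.exp (h*c) := Real.exp_pos _
    have hexε : 0 < Real.exp (h*ε) := Real.exp_pos _
    calc Real.exp (h*x) * c ≤ (Real.exp (h*c) * Real.exp (h*ε)) * (x * (1 + 4/t₀*ε)) := by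
          nlinarith [mul_pos hexc hexε]
      _ ≤ Real.exp (h*c) * Real.exp u * x := by
          rw [e2]
          have h4 : x * (1 + 4/t₀*ε) ≤ x * Real.exp (4/t₀*ε) :=
            mul_le_mul_of_nonneg_left e3 hx0.le
          nlinarith [mul_pos hexc hexε]
  -- pointwise lower bound
  have hlb : ∀ x ∈ Set.Icc (c-ε) (c+ε),
      Real.exp (h*c)/c * Real.exp (-u) ≤ Real.exp (h*x)/x := by
    intro x hx
    have hx1 := hx.1; have hx2 := hx.2
    have hx0 : 0 < x := lt_of_lt_of_le hcε hx1
    rw [div_mul_eq_mul_div, div_le_div_iff₀ hc0 hx0]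
    have e1 : Real.exp (h*c) * Real.exp (-(h*ε)) ≤ Real.exp (h*x) := by
      rw [← Real.exp_add]; apply Real.exp_le_exp.mpr; nlinarith
    have e2 : Real.exp (-u) = Real.exp (-(h*ε)) * Real.exp (-(4/t₀*ε)) := by
      rw [← Real.exp_add, hu]; ring_nf
    have key2 : x ≤ c * Real.exp (4/t₀*ε) := by
      have h1 : c + ε ≤ c * (1 + 4/t₀*ε) := by
        have hc78 : 7*t₀/8 ≤ c := by linarith
        have h2 : 3*ε ≤ c * (4/t₀*ε) := by
          rw [← sub_nonneg]
          have e : c * (4/t₀*ε) - 3*ε = (4*ε/t₀) * (c - 3*t₀/4) := by field_simp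
          rw [e]; exact mul_nonneg (by positivity) (by linarith)
        nlinarith
      have h3 : c * (1 + 4/t₀*ε) ≤ c * Real.exp (4/t₀*ε) :=
        mul_le_mul_of_nonneg_left e3 hc0.le
      linarith
    have h5 : Real.exp (-(4/t₀*ε)) * x ≤ c := by
      have := mul_le_mul_of_nonneg_left key2 (Real.exp_pos (-(4/t₀*ε))).le
      calc Real.exp (-(4/t₀*ε)) * x ≤ Real.exp (-(4/t₀*ε)) * (c * Real.exp (4/t₀*ε)) := this
        _ = c := by rw [Real.exp_neg]; field_simp
    calc Real.exp (h*c) * Real.exp (-u) * x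
        = Real.exp (h*c) * Real.exp (-(h*ε)) * (Real.exp (-(4/t₀*ε)) * x) := by rw [e2]; ring
      _ ≤ Real.exp (h*c) * Real.exp (-(h*ε)) * c := by
          apply mul_le_mul_of_nonneg_left h5; positivity
      _ ≤ Real.exp (h*x) * c := mul_le_mul_of_nonneg_right e1 hc0.le
  -- integral comparisons
  have hlen : c + ε - (c - ε) = 2*ε := by ring
  have hIle : ∫ x in (c-ε)..(c+ε), Real.exp (h*x)/x ≤ 2*ε*(Real.exp (h*c)/c * Real.exp u) := by
    have := int_le_const (by linarith : c-ε ≤ c+ε) hint hub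
    rw [hlen] at this; exact this
  have hIge : 2*ε*(Real.exp (h*c)/c * Real.exp (-u)) ≤ ∫ x in (c-ε)..(c+ε), Real.exp (h*x)/x := by
    have := const_le_int (by linarith : c-ε ≤ c+ε) hint hlb
    rw [hlen] at this; exact this
  constructor
  · calc 2*ε*(Real.exp (h*c)/c)
        = Real.exp u * (2*ε*(Real.exp (h*c)/c * Real.exp (-u))) := by
          rw [Real.exp_neg]; field_simp
      _ ≤ Real.exp u * ∫ x in (c-ε)..(c+ε), Real.exp (h*x)/x :=
          mul_le_mul_of_nonneg_left hIge hEpos.le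
  · calc Real.exp (-u) * (∫ x in (c-ε)..(c+ε), Real.exp (h*x)/x)
        ≤ Real.exp (-u) * (2*ε*(Real.exp (h*c)/c * Real.exp u)) :=
          mul_le_mul_of_nonneg_left hIle (Real.exp_pos _).le
      _ = 2*ε*(Real.exp (h*c)/c) := by rw [Real.exp_neg]; field_simp


private lemma Mlow (h M t : ℝ) (hh : 0 < h) (hM0 : 0 < M) (ht0 : 0 < t)
    (htM : 4*M*Real.exp h/h^2 < t) : M ≤ Real.exp (h*(t-1))/t := by
  have e1 : h*t/2 + 1 ≤ Real.exp (h*t/2) := Real.add_one_le_exp _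
  have e2 : Real.exp (h*t) = Real.exp (h*t/2) * Real.exp (h*t/2) := by
    rw [← Real.exp_add]; ring_nf
  have e3 : h^2*t^2/4 ≤ Real.exp (h*t) := by
    rw [e2]; nlinarith [Real.exp_pos (h*t/2), mul_pos hh ht0]
  have htM2 : 4*M*Real.exp h < t * h^2 := (div_lt_iff₀ (by positivity)).mp htM
  have e4 : M * t * Real.exp h ≤ Real.exp (h*t) := by nlinarith [Real.exp_pos h]
  have e6 : Real.exp (h*(t-1)) * Real.exp h = Real.exp (h*t) := by
    rw [← Real.exp_add]; ring_nf
  rw [le_div_iff₀ ht0]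
  exact le_of_mul_le_mul_right (by rw [e6]; exact e4) (Real.exp_pos h)

set_option maxHeartbeats 1000000 in
/-- Riemann-sum approximation for `f(x) = e^{hx}/x`: the midpoint-type Riemann sum
`S(ε) = ∑_{i=⌊t₀/2ε⌋}^{⌊t/2ε⌋} 2ε f((2i+1)ε)` over `[t₀, t]` agrees with
`∫_{t₀}^t f` up to multiplicative error `e^{Kε}`, uniformly in large `t`. -/
theorem riemann_sum_approximation (h t₀ : ℝ) (hh : 0 < h) (ht₀ : 0 < t₀) :
    ∃ K > (0:ℝ), ∃ ε₀ > (0:ℝ), ∀ ε ∈ Set.Ioo (0:ℝ) ε₀, ∃ T₀ : ℝ, ∀ t > T₀,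
      |Real.log
        ((∑ i ∈ Finset.Icc (Nat.floor (t₀ / (2 * ε))) (Nat.floor (t / (2 * ε))),
            2 * ε * (Real.exp (h * ((2 * (i : ℝ) + 1) * ε)) / ((2 * (i : ℝ) + 1) * ε))) /
          (∫ x in t₀..t, Real.exp (h * x) / x))| < K * ε := by
  have hC₁0 : 0 < h + 4/t₀ := by positivity
  set C₁ : ℝ := h + 4/t₀ with hC₁
  have hC₂0 : 0 < 2*Real.exp (3*h) := by positivity
  set C₂ : ℝ := 2*Real.exp (3*h) with hC₂
  refine ⟨C₁ + C₂ + 2, by linarith, min (t₀/8) 1, lt_min (by positivity) one_pos, ?_⟩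
  rintro ε ⟨hε0, hεlt⟩
  have hε8 : ε ≤ t₀/8 := le_of_lt (lt_of_lt_of_le hεlt (min_le_left _ _))
  have hε1 : ε ≤ 1 := le_of_lt (lt_of_lt_of_le hεlt (min_le_right _ _))
  have hM0 : 0 < 4*Real.exp (h*t₀)/t₀ := by positivity
  set M : ℝ := 4*Real.exp (h*t₀)/t₀ with hM
  refine ⟨max (t₀+1) (4*M*Real.exp h/h^2), ?_⟩
  intro t ht
  have ht1 : t₀ + 1 < t := lt_of_le_of_lt (le_max_left _ _) ht
  have htM : 4*M*Real.exp h/h^2 < t := lt_of_le_of_lt (le_max_right _ _) ht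
  have ht0 : 0 < t := by linarith
  have h2ε : (0:ℝ) < 2*ε := by linarith
  set i₀ := Nat.floor (t₀/(2*ε)) with hi₀
  set N := Nat.floor (t/(2*ε)) with hN
  have hi₀N : i₀ ≤ N := Nat.floor_le_floor (by gcongr <;> linarith)
  have ha_le : 2*ε*(i₀:ℝ) ≤ t₀ := by
    have h1 : (i₀:ℝ) ≤ t₀/(2*ε) := Nat.floor_le (by positivity)
    have h2 := (le_div_iff₀ h2ε).mp h1
    linarith
  have ha_gt : t₀ - 2*ε < 2*ε*(i₀:ℝ) := by
    have h1 : t₀/(2*ε) < (i₀:ℝ) + 1 := Nat.lt_floor_add_one _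
    have h2 := (div_lt_iff₀ h2ε).mp h1
    linarith
  have hb_gt : t < 2*ε*((N:ℝ)+1) := by
    have h1 : t/(2*ε) < (N:ℝ) + 1 := Nat.lt_floor_add_one _
    have h2 := (div_lt_iff₀ h2ε).mp h1
    linarith
  have hb_le : 2*ε*((N:ℝ)+1) ≤ t + 2*ε := by
    have h1 : (N:ℝ) ≤ t/(2*ε) := Nat.floor_le (by positivity)
    have h2 := (le_div_iff₀ h2ε).mp h1
    linarith
  have ha0 : 0 < 2*ε*(i₀:ℝ) := by linarith
  have hb0 : 0 < 2*ε*((N:ℝ)+1) := by linarith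
  set a : ℝ := 2*ε*(i₀:ℝ) with ha
  set b : ℝ := 2*ε*((N:ℝ)+1) with hb
  set n := N + 1 - i₀ with hn
  set aF : ℕ → ℝ := fun k => 2*ε*((i₀:ℝ)+(k:ℝ)) with haF
  have haFpos : ∀ k : ℕ, 0 < aF k := by
    intro k
    have hk : (0:ℝ) ≤ ε*(k:ℝ) := mul_nonneg hε0.le (Nat.cast_nonneg k)
    simp only [haF]
    nlinarith [ha_gt, ha, hk, hε8, ht₀]
  set S := (∑ i ∈ Finset.Icc i₀ N,
      2 * ε * (Real.exp (h * ((2 * (i : ℝ) + 1) * ε)) / ((2 * (i : ℝ) + 1) * ε))) with hS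
  set I := ∫ x in t₀..t, Real.exp (h * x) / x with hI
  have hS_eq : S = ∑ k ∈ Finset.range n,
      2 * ε * (Real.exp (h * ((2 * ((i₀:ℝ)+(k:ℝ)) + 1) * ε)) / ((2 * ((i₀:ℝ)+(k:ℝ)) + 1) * ε)) := by
    rw [hS, ← Finset.Ico_add_one_right_eq_Icc, Finset.sum_Ico_eq_sum_range]
    apply Finset.sum_congr rfl
    intro k _
    push_cast
    ring_nf
  have hintk : ∀ k : ℕ, IntervalIntegrable (fun x => Real.exp (h*x)/x)
      MeasureTheory.volume (aF k) (aF (k+1)) :=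
    fun k => fInt h _ _ (haFpos k) (haFpos (k+1))
  have hadj : ∑ k ∈ Finset.range n, (∫ x in aF k..aF (k+1), Real.exp (h*x)/x)
      = ∫ x in (aF 0)..(aF n), Real.exp (h*x)/x :=
    intervalIntegral.sum_integral_adjacent_intervals (fun k _ => hintk k)
  have haF0 : aF 0 = a := by simp [haF, ha]
  have haFn : aF n = b := by
    have h1 : i₀ + n = N + 1 := by omega
    have h2 : (i₀:ℝ) + (n:ℝ) = (N:ℝ) + 1 := by
      have := congrArg (Nat.cast (R := ℝ)) h1
      push_cast at this
      linarith
    simp only [haF, hb, h2]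
  set J := ∫ x in a..b, Real.exp (h*x)/x with hJ
  rw [haF0, haFn, ← hJ] at hadj
  -- per-cell bounds
  have hcell : ∀ k ∈ Finset.range n,
      (2 * ε * (Real.exp (h * ((2 * ((i₀:ℝ)+(k:ℝ)) + 1) * ε)) / ((2 * ((i₀:ℝ)+(k:ℝ)) + 1) * ε))
        ≤ Real.exp (C₁*ε) * ∫ x in aF k..aF (k+1), Real.exp (h*x)/x)
      ∧ (Real.exp (-(C₁*ε)) * ∫ x in aF k..aF (k+1), Real.exp (h*x)/x
        ≤ 2 * ε * (Real.exp (h * ((2 * ((i₀:ℝ)+(k:ℝ)) + 1) * ε)) / ((2 * ((i₀:ℝ)+(k:ℝ)) + 1) * ε))) := by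
    intro k _
    have hk : (0:ℝ) ≤ (k:ℝ) := Nat.cast_nonneg k
    have hc := cell h t₀ ε ((2*((i₀:ℝ)+(k:ℝ))+1)*ε) hh ht₀ hε0 hε8
      (by
        have h1 : 0 ≤ (k:ℝ)*ε := mul_nonneg hk hε0.le
        have h2 : (2*((i₀:ℝ)+(k:ℝ))+1)*ε = a + 2*((k:ℝ)*ε) + ε := by rw [ha]; ring
        linarith)
    rw [← hC₁] at hc
    have e1 : (2*((i₀:ℝ)+(k:ℝ))+1)*ε - ε = aF k := by simp only [haF]; ring
    have e2 : (2*((i₀:ℝ)+(k:ℝ))+1)*ε + ε = aF (k+1) := by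
      simp only [haF]; push_cast; ring
    rw [e1, e2] at hc
    exact hc
  have key_up : S ≤ Real.exp (C₁*ε) * J := by
    rw [hS_eq]
    calc ∑ k ∈ Finset.range n,
          2 * ε * (Real.exp (h * ((2 * ((i₀:ℝ)+(k:ℝ)) + 1) * ε)) / ((2 * ((i₀:ℝ)+(k:ℝ)) + 1) * ε))
        ≤ ∑ k ∈ Finset.range n, Real.exp (C₁*ε) * ∫ x in aF k..aF (k+1), Real.exp (h*x)/x :=
          Finset.sum_le_sum (fun k hk => (hcell k hk).1)
      _ = Real.exp (C₁*ε) * J := by rw [← Finset.mul_sum, hadj]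
  have key_lo : Real.exp (-(C₁*ε)) * J ≤ S := by
    rw [hS_eq]
    calc Real.exp (-(C₁*ε)) * J
        = ∑ k ∈ Finset.range n, Real.exp (-(C₁*ε)) * ∫ x in aF k..aF (k+1), Real.exp (h*x)/x := by
          rw [← Finset.mul_sum, hadj]
      _ ≤ _ := Finset.sum_le_sum (fun k hk => (hcell k hk).2)
  -- integral splitting
  have ht₀t : t₀ ≤ t := by linarith
  have htb : t ≤ b := hb_gt.le
  have hsplit1 : (∫ x in a..t₀, Real.exp (h*x)/x) + (∫ x in t₀..b, Real.exp (h*x)/x) = J :=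
    intervalIntegral.integral_add_adjacent_intervals (fInt h a t₀ ha0 ht₀) (fInt h t₀ b ht₀ hb0)
  have hsplit2 : I + (∫ x in t..b, Real.exp (h*x)/x) = ∫ x in t₀..b, Real.exp (h*x)/x := by
    rw [hI]
    exact intervalIntegral.integral_add_adjacent_intervals (fInt h t₀ t ht₀ ht0) (fInt h t b ht0 hb0)
  -- lower bound on I
  have hIlow : Real.exp (h*(t-1))/t ≤ I := by
    have hs : (∫ x in t₀..(t-1), Real.exp (h*x)/x) + (∫ x in (t-1)..t, Real.exp (h*x)/x) = I := by
      rw [hI]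
      exact intervalIntegral.integral_add_adjacent_intervals
        (fInt h t₀ (t-1) ht₀ (by linarith)) (fInt h (t-1) t (by linarith) ht0)
    have h1 : 0 ≤ ∫ x in t₀..(t-1), Real.exp (h*x)/x := by
      apply intervalIntegral.integral_nonneg (by linarith)
      intro u hu
      have : 0 < u := lt_of_lt_of_le ht₀ hu.1
      positivity
    have h2 : (t - (t-1)) * (Real.exp (h*(t-1))/t) ≤ ∫ x in (t-1)..t, Real.exp (h*x)/x := by
      apply const_le_int (by linarith) (fInt h (t-1) t (by linarith) ht0)
      intro x hx
      have hx0 : 0 < x := lt_of_lt_of_le (by linarith) hx.1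
      gcongr
      · exact hx.1
      · exact hx.2
    have h3 : t - (t-1) = 1 := by ring
    rw [h3, one_mul] at h2
    linarith
  have hIpos : 0 < I := lt_of_lt_of_le (by positivity) hIlow
  -- left piece
  have hleft : (∫ x in a..t₀, Real.exp (h*x)/x) ≤ ε * M := by
    have hbnd : ∀ x ∈ Set.Icc a t₀, Real.exp (h*x)/x ≤ Real.exp (h*t₀)/a := by
      intro x hx
      have hx0 : 0 < x := lt_of_lt_of_le ha0 hx.1
      gcongr
      · exact hx.2
      · exact hx.1
    have h1 := int_le_const ha_le (fInt h a t₀ ha0 ht₀) hbnd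
    have h2 : Real.exp (h*t₀)/a ≤ 2*Real.exp (h*t₀)/t₀ := by
      rw [div_le_div_iff₀ ha0 ht₀]
      have h2a : t₀ ≤ 2*a := by linarith
      calc Real.exp (h*t₀) * t₀ ≤ Real.exp (h*t₀) * (2*a) :=
            mul_le_mul_of_nonneg_left h2a (Real.exp_pos _).le
        _ = 2*Real.exp (h*t₀)*a := by ring
    have h3 : t₀ - a ≤ 2*ε := by linarith [ha_gt]
    have h4 : 0 ≤ Real.exp (h*t₀)/a := by positivity
    rw [hM]
    calc (∫ x in a..t₀, Real.exp (h*x)/x) ≤ (t₀ - a) * (Real.exp (h*t₀)/a) := h1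
      _ ≤ 2*ε * (Real.exp (h*t₀)/a) := mul_le_mul_of_nonneg_right h3 h4
      _ ≤ 2*ε * (2*Real.exp (h*t₀)/t₀) := mul_le_mul_of_nonneg_left h2 (by linarith)
      _ = ε * (4*Real.exp (h*t₀)/t₀) := by ring
  -- M ≤ exp(h(t-1))/t
  have hMI : M ≤ Real.exp (h*(t-1))/t := Mlow h M t hh hM0 ht0 htM
  -- right piece
  have hright : (∫ x in t..b, Real.exp (h*x)/x) ≤ C₂ * ε * I := by
    have hbnd : ∀ x ∈ Set.Icc t b, Real.exp (h*x)/x ≤ Real.exp (h*b)/t := by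
      intro x hx
      have hx0 : 0 < x := lt_of_lt_of_le ht0 hx.1
      gcongr
      · exact hx.2
      · exact hx.1
    have h1 := int_le_const htb (fInt h t b ht0 hb0) hbnd
    have p2 : Real.exp (h*b) ≤ Real.exp (h*(t-1)) * Real.exp (3*h) := by
      rw [← Real.exp_add]
      apply Real.exp_le_exp.mpr
      have h8 : b ≤ t + 2 := by linarith [hb_le]
      have h9 : h*b ≤ h*(t+2) := mul_le_mul_of_nonneg_left h8 hh.le
      linarith
    have hbt : b - t ≤ 2*ε := by linarith [hb_le]
    calc (∫ x in t..b, Real.exp (h*x)/x) ≤ (b-t) * (Real.exp (h*b)/t) := h1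
      _ ≤ 2*ε * ((Real.exp (h*(t-1)) * Real.exp (3*h))/t) :=
          mul_le_mul hbt ((div_le_div_iff_of_pos_right ht0).mpr p2) (by positivity) (by linarith)
      _ = 2*Real.exp (3*h) * ε * (Real.exp (h*(t-1))/t) := by ring
      _ ≤ C₂ * ε * I := by
          rw [hC₂]
          exact mul_le_mul_of_nonneg_left hIlow (by positivity)
  -- combine
  have hJup : J ≤ I * Real.exp ((C₂+1)*ε) := by
    have e : 1 + (C₂+1)*ε ≤ Real.exp ((C₂+1)*ε) := by
      linarith [Real.add_one_le_exp ((C₂+1)*ε)]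
    have hJdec : J = (∫ x in a..t₀, Real.exp (h*x)/x) + I + (∫ x in t..b, Real.exp (h*x)/x) := by
      rw [← hsplit1, ← hsplit2]; ring
    have hleftI : (∫ x in a..t₀, Real.exp (h*x)/x) ≤ ε * I := by
      have h5 : M ≤ I := le_trans hMI hIlow
      have h6 : ε * M ≤ ε * I := mul_le_mul_of_nonneg_left h5 hε0.le
      linarith
    have h7 : I * (1 + (C₂+1)*ε) ≤ I * Real.exp ((C₂+1)*ε) :=
      mul_le_mul_of_nonneg_left e hIpos.le
    linarith [hJdec, hleftI, hright, h7]
  have hJlo : I ≤ J := by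
    have hJdec : J = (∫ x in a..t₀, Real.exp (h*x)/x) + I + (∫ x in t..b, Real.exp (h*x)/x) := by
      rw [← hsplit1, ← hsplit2]; ring
    have h1 : 0 ≤ ∫ x in a..t₀, Real.exp (h*x)/x := by
      apply intervalIntegral.integral_nonneg ha_le
      intro u hu
      have : 0 < u := lt_of_lt_of_le ha0 hu.1
      positivity
    have h2 : 0 ≤ ∫ x in t..b, Real.exp (h*x)/x := by
      apply intervalIntegral.integral_nonneg htb
      intro u hu
      have : 0 < u := lt_of_lt_of_le ht0 hu.1
      positivity
    linarith
  have hS_up : S ≤ I * Real.exp ((C₁ + C₂ + 1)*ε) := by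
    calc S ≤ Real.exp (C₁*ε) * J := key_up
      _ ≤ Real.exp (C₁*ε) * (I * Real.exp ((C₂+1)*ε)) :=
          mul_le_mul_of_nonneg_left hJup (Real.exp_pos _).le
      _ = I * Real.exp ((C₁+C₂+1)*ε) := by
          rw [show (C₁+C₂+1)*ε = C₁*ε + (C₂+1)*ε by ring, Real.exp_add]; ring
  have hS_lo : I * Real.exp (-(C₁*ε)) ≤ S := by
    calc I * Real.exp (-(C₁*ε)) ≤ J * Real.exp (-(C₁*ε)) :=
          mul_le_mul_of_nonneg_right hJlo (Real.exp_pos _).le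
      _ = Real.exp (-(C₁*ε)) * J := mul_comm _ _
      _ ≤ S := key_lo
  have hSpos : 0 < S := lt_of_lt_of_le (by positivity) hS_lo
  have hr_up : S / I ≤ Real.exp ((C₁+C₂+1)*ε) := (div_le_iff₀ hIpos).mpr (by linarith)
  have hr_lo : Real.exp (-(C₁*ε)) ≤ S / I := (le_div_iff₀ hIpos).mpr (by linarith [hS_lo])
  have hl1 : Real.log (S/I) ≤ (C₁+C₂+1)*ε := by
    have := Real.log_le_log (div_pos hSpos hIpos) hr_up
    rwa [Real.log_exp] at this
  have hl2 : -(C₁*ε) ≤ Real.log (S/I) := by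
    have := Real.log_le_log (Real.exp_pos _) hr_lo
    rwa [Real.log_exp] at this
  rw [abs_lt]
  have hp1 : 0 < (C₂+2)*ε := mul_pos (by linarith) hε0
  have hp2 : (C₁+C₂+1)*ε < (C₁+C₂+2)*ε := mul_lt_mul_of_pos_right (by linarith) hε0
  constructor
  · linarith [hl2, hp1]
  · linarith [hl1, hp2]
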